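/- Let D be an oriented cactus and C a cycle of D with exactly two extreme vertices u1 (a source in C) and u2 (a sink in C), such that the two (u1,u2)-paths along C have different lengths and the longer path has no internal cut-vertices of D. Then the set of internal vertices of the longer (u1,u2)-path is co-convex in D. -/

import Mathlib

variable {V : Type*}

/-- A directed walk from `u` to `v` given as its list of vertices. -/
def DiwalkFrom (A : V → V → Prop) (u v : V) (l : List V) : Prop :=
  l.Chain' A ∧ l.head? = some u ∧ l.getLast? = some v

/-- A `(u,v)`-geodesic: a directed walk of minimum length (hence a shortest directed path). -/
def IsGeodesic (A : V → V → Prop) (u v : V) (l : List V) : Prop :=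
  DiwalkFrom A u v l ∧ ∀ l', DiwalkFrom A u v l' → l.length ≤ l'.length

/-- The interval `I(S)`: `S` together with all vertices on geodesics between members of `S`. -/
def geoInterval (A : V → V → Prop) (S : Set V) : Set V :=
  S ∪ {w | ∃ u ∈ S, ∃ v ∈ S, ∃ l, IsGeodesic A u v l ∧ w ∈ l}

def GeoConvex (A : V → V → Prop) (S : Set V) : Prop := geoInterval A S = S

/-- The geodesic convex hull of `S`. -/
def geoHull (A : V → V → Prop) (S : Set V) : Set V := ⋂₀ {T | S ⊆ T ∧ GeoConvex A T}

def IsHullSet (A : V → V → Prop) (S : Set V) : Prop := geoHull A S = Set.univ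

def IsGeodeticSet (A : V → V → Prop) (S : Set V) : Prop := geoInterval A S = Set.univ

noncomputable def hullNumber (A : V → V → Prop) : ℕ :=
  sInf {n | ∃ S : Set V, S.Finite ∧ S.ncard = n ∧ IsHullSet A S}

noncomputable def geodeticNumber (A : V → V → Prop) : ℕ :=
  sInf {n | ∃ S : Set V, S.Finite ∧ S.ncard = n ∧ IsGeodeticSet A S}

def IsSource (A : V → V → Prop) (v : V) : Prop := ∀ u, ¬ A u v
def IsSink (A : V → V → Prop) (v : V) : Prop := ∀ w, ¬ A v w
def IsTransitiveVtx (A : V → V → Prop) (v : V) : Prop :=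
  (∃ u, A u v) ∧ (∃ w, A v w) ∧ ∀ u w, A u v → A v w → A u w
def IsExtremeVtx (A : V → V → Prop) (v : V) : Prop :=
  IsSource A v ∨ IsSink A v ∨ IsTransitiveVtx A v

/-- An oriented graph: an asymmetric (hence irreflexive) arc relation. -/
def Oriented (A : V → V → Prop) : Prop := ∀ u v, A u v → ¬ A v u

/-- Directed distance, `⊤` if there is no directed walk. -/
noncomputable def ddist (A : V → V → Prop) (u v : V) : ℕ∞ :=
  sInf {n : ℕ∞ | ∃ l, DiwalkFrom A u v l ∧ (l.length : ℕ∞) = n + 1}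


/-- A cactus: connected, and any two cycles sharing an edge have the same edge set
(i.e., every edge lies in at most one cycle). -/
def IsCactus {V : Type*} (G : SimpleGraph V) : Prop :=
  G.Connected ∧ ∀ ⦃x y : V⦄ (c₁ : G.Walk x x) (c₂ : G.Walk y y),
    c₁.IsCycle → c₂.IsCycle → (∃ e, e ∈ c₁.edges ∧ e ∈ c₂.edges) →
    (∀ e, e ∈ c₁.edges ↔ e ∈ c₂.edges)

/-- `v` is a cut-vertex of the connected graph `G`. -/
def IsCutVertex {V : Type*} (G : SimpleGraph V) (v : V) : Prop :=
  G.Connected ∧ ¬ (G.induce {w | w ≠ v}).Connected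



open SimpleGraph

private lemma chain'_getElem' {A : V → V → Prop} {l : List V} (h : l.Chain' A)
    {i : ℕ} (hi : i + 1 < l.length) : A (l[i]'(by omega)) (l[i+1]'hi) := by
  have := List.isChain_iff_getElem.mp h i (by omega)
  simpa using this

private lemma walk_support_getElem {G : SimpleGraph V} {u v : V} (p : G.Walk u v) :
    ∀ (i : ℕ) (h : i < p.support.length), p.support[i] = p.getVert i := by
  induction p with
  | nil =>
    intro i h
    simp only [Walk.support_nil, List.length_singleton] at h
    interval_cases i
    simp [Walk.getVert_zero]
  | cons ha q ih =>
    intro i h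
    cases i with
    | zero => simp
    | succ n =>
      simp only [Walk.support_cons, List.getElem_cons_succ, Walk.getVert_cons_succ]
      exact ih n (by simpa [Walk.support_cons] using h)

private lemma walk_edges_getVert {G : SimpleGraph V} {u v : V} (p : G.Walk u v) {e : Sym2 V} :
    e ∈ p.edges ↔ ∃ i, i < p.length ∧ e = s(p.getVert i, p.getVert (i+1)) := by
  induction p with
  | nil => simp
  | cons ha q ih =>
    simp only [Walk.edges_cons, List.mem_cons, ih, Walk.length_cons]
    constructor
    · rintro (rfl | ⟨i, hi, rfl⟩)
      · exact ⟨0, by omega, by simp [Walk.getVert_zero, Walk.getVert_cons_succ]⟩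
      · exact ⟨i + 1, by omega, by simp [Walk.getVert_cons_succ]⟩
    · rintro ⟨i, hi, rfl⟩
      cases i with
      | zero => left; simp [Walk.getVert_zero, Walk.getVert_cons_succ]
      | succ n => right; exact ⟨n, by omega, by simp [Walk.getVert_cons_succ]⟩

private lemma cycle_getVert_eq {G : SimpleGraph V} {w : V} {d : G.Walk w w} (hd : d.IsCycle)
    {i : ℕ} (hi : i ≤ d.length) (hw : d.getVert i = w) : i = 0 ∨ i = d.length := by
  by_contra hcon
  push_neg at hcon
  obtain ⟨h0, hn⟩ := hcon
  have h0' : 0 < i := Nat.pos_of_ne_zero h0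
  have hlt : i < d.length := lt_of_le_of_ne hi hn
  have hnd : d.support.tail.Nodup := ((Walk.isCycle_def d).mp hd).2.2
  have hts : d.support.tail.length = d.length := by
    simp [List.length_tail, Walk.length_support]
  have key : ∀ (j : ℕ) (h : j < d.support.tail.length),
      d.support.tail[j] = d.getVert (j+1) := by
    intro j h
    rw [List.getElem_tail, walk_support_getElem]
  have e1 : d.support.tail[i-1]'(by omega) = w := by
    rw [key (i-1) (by omega)]
    rw [show i - 1 + 1 = i by omega]
    exact hw
  have e2 : d.support.tail[d.length-1]'(by omega) = w := by
    rw [key (d.length-1) (by omega)]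
    rw [show d.length - 1 + 1 = d.length by omega]
    exact d.getVert_length
  have := (hnd.getElem_inj_iff).mp (e1.trans e2.symm)
  omega

private lemma cycle_edge_endpoints {G : SimpleGraph V} {w : V} {d : G.Walk w w} (hd : d.IsCycle)
    {x : V} (hx : s(w, x) ∈ d.edges) : x = d.getVert 1 ∨ x = d.getVert (d.length - 1) := by
  obtain ⟨i, hi, he⟩ := (walk_edges_getVert d).mp hx
  rcases Sym2.eq_iff.mp he with ⟨h1, h2⟩ | ⟨h1, h2⟩
  · rcases cycle_getVert_eq hd (le_of_lt hi) h1.symm with h | h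
    · left; rw [h] at h2; exact h2
    · omega
  · rcases cycle_getVert_eq hd (by omega) h1.symm with h | h
    · omega
    · right; rw [show d.length - 1 = i by omega]; exact h2

private lemma first_edge_mem {G : SimpleGraph V} {w : V} (d : G.Walk w w) (h0 : 0 < d.length) :
    s(w, d.getVert 1) ∈ d.edges :=
  (walk_edges_getVert d).mpr ⟨0, h0, by rw [Walk.getVert_zero]⟩

private lemma adj_edge_mem_cycle {G : SimpleGraph V} (hG : IsCactus G) {u0 w : V}
    (c : G.Walk u0 u0) (hc : c.IsCycle) (hw : w ∈ c.support)
    (hncut : ¬ IsCutVertex G w) {x : V} (hx : G.Adj w x) : s(w, x) ∈ c.edges := by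
  classical
  set d := c.rotate w hw with hdd
  have hd : d.IsCycle := hc.rotate hw
  have hmemiff : ∀ e : Sym2 V, e ∈ d.edges ↔ e ∈ c.edges := fun e =>
    (c.rotate_edges w hw).perm.mem_iff
  have h0 : 0 < d.length := by have := hd.three_le_length; omega
  set a := d.getVert 1 with ha
  have haw : G.Adj w a := by simpa using d.adj_getVert_succ h0
  by_cases hxa : x = a
  · subst hxa; exact (hmemiff _).mp (first_edge_mem d h0)
  have hind : (G.induce {y | y ≠ w}).Connected := by
    by_contra hcon; exact hncut ⟨hG.1, hcon⟩
  have hxw : x ≠ w := fun h => G.irrefl (h ▸ hx)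
  have haw' : a ≠ w := fun h => G.irrefl (h ▸ haw)
  obtain ⟨p0⟩ := hind.preconnected ⟨x, hxw⟩ ⟨a, haw'⟩
  set p1 := p0.toPath with hp1
  have hinj : Function.Injective ⇑((SimpleGraph.Embedding.induce (G := G) {y | y ≠ w}).toHom) := by
    exact fun s t h => Subtype.val_injective h
  set q : G.Walk x a :=
    (p1 : (G.induce {y | y ≠ w}).Walk ⟨x, hxw⟩ ⟨a, haw'⟩).map
      (SimpleGraph.Embedding.induce (G := G) {y | y ≠ w}).toHom with hqdef
  have hq : q.IsPath := Walk.map_isPath_of_injective hinj p1.2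
  have hwq : w ∉ q.support := by
    erw [hqdef, Walk.support_map]
    rintro hmem
    obtain ⟨⟨y, hy⟩, _, h⟩ := List.mem_map.mp hmem
    exact hy h
  set C : G.Walk w w := Walk.cons hx (q.concat haw.symm) with hC
  have hCe : C.edges = s(w, x) :: (q.edges ++ [s(a, w)]) := by
    rw [hC, Walk.edges_cons, Walk.edges_concat, List.concat_eq_append]
  have hCs : C.support = w :: (q.support ++ [w]) := by
    rw [hC, Walk.support_cons, Walk.support_concat]
  have hwx_ne : s(w, x) ≠ s(a, w) := by
    intro h
    rcases Sym2.eq_iff.mp h with ⟨h1, _⟩ | ⟨_, h2⟩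
    · exact haw' h1.symm
    · exact hxa h2
  have hwx_nq : s(w, x) ∉ q.edges := fun h => hwq (q.fst_mem_support_of_mem_edges h)
  have haw_nq : s(a, w) ∉ q.edges := fun h => hwq (q.snd_mem_support_of_mem_edges h)
  have hCcyc : C.IsCycle := by
    rw [Walk.isCycle_def]
    refine ⟨?_, by simp [hC], ?_⟩
    · rw [Walk.isTrail_def, hCe]
      rw [List.nodup_cons, List.mem_append, List.nodup_append]
      refine ⟨?_, hq.isTrail.edges_nodup, List.nodup_singleton _, ?_⟩
      · rintro (h | h)
        · exact hwx_nq h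
        · exact hwx_ne (List.mem_singleton.mp h)
      · intro e he h' hh'
        rw [List.mem_singleton] at hh'
        subst hh'
        rintro rfl
        exact haw_nq he
    · rw [hCs]
      simp only [List.tail_cons, List.nodup_append, List.nodup_singleton,
        List.disjoint_singleton, and_true, true_and]
      exact ⟨hq.support_nodup, fun y hy b hb => by
        rw [List.mem_singleton] at hb; subst hb; rintro rfl; exact hwq hy⟩
  have hshared : s(a, w) ∈ C.edges := by
    rw [hCe]
    exact List.mem_cons_of_mem _ (List.mem_append_right _ (List.mem_singleton_self _))
  have hsharedd : s(a, w) ∈ d.edges := by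
    rw [Sym2.eq_swap]
    exact first_edge_mem d h0
  have hiff := hG.2 C d hCcyc hd ⟨s(a, w), hshared, hsharedd⟩
  have : s(w, x) ∈ d.edges := (hiff s(w, x)).mp (by rw [hCe]; exact List.mem_cons_self)
  exact (hmemiff _).mp this

private lemma adj_force {G : SimpleGraph V} (hG : IsCactus G) {u0 w : V}
    (c : G.Walk u0 u0) (hc : c.IsCycle) (hw : w ∈ c.support) (hncut : ¬ IsCutVertex G w)
    {pr sc : V} (hp : G.Adj w pr) (hs : G.Adj w sc) (hps : pr ≠ sc)
    {x : V} (hx : G.Adj w x) : x = pr ∨ x = sc := by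
  classical
  set d := c.rotate w hw with hdd
  have hd : d.IsCycle := hc.rotate hw
  have hmemiff : ∀ e : Sym2 V, e ∈ d.edges ↔ e ∈ c.edges := fun e =>
    (c.rotate_edges w hw).perm.mem_iff
  have key : ∀ y, G.Adj w y → y = d.getVert 1 ∨ y = d.getVert (d.length - 1) := fun y hy =>
    cycle_edge_endpoints hd ((hmemiff _).mpr (adj_edge_mem_cycle hG c hc hw hncut hy))
  rcases key x hx with h3 | h3 <;> rcases key pr hp with h1 | h1 <;>
      rcases key sc hs with h2 | h2 <;>
    first
      | exact absurd (h1.trans h2.symm) hps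
      | exact Or.inl (h3.trans h1.symm)
      | exact Or.inr (h3.trans h2.symm)

private lemma back_seg {A : V → V → Prop} {l2 : List V}
    (hforce : ∀ (i : ℕ) (h1 : 0 < i) (h2 : i + 1 < l2.length),
      ∀ x, A x (l2[i]'(by omega)) → x = l2[i-1]'(by omega))
    (Intl : V → Prop)
    (hInt : ∀ (i : ℕ) (h1 : 0 < i) (h2 : i + 1 < l2.length), Intl (l2[i]'(by omega)))
    {l : List V} (hch : l.Chain' A) (hhead : ∀ h0 : 0 < l.length, ¬ Intl (l[0]'h0)) :
    ∀ (i : ℕ) (h1 : 0 < i) (h2 : i + 1 < l2.length) (p : ℕ) (hp : p < l.length),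
      l[p] = l2[i]'(by omega) →
      ∃ hip : i ≤ p, ∀ (j : ℕ) (hj : j ≤ i), l[p - i + j]'(by omega) = l2[j]'(by omega) := by
  intro i
  induction i using Nat.strong_induction_on with
  | _ i ih =>
    intro h1 h2 p hp hpw
    have hp0 : p ≠ 0 := by
      intro h
      subst h
      refine hhead (by omega) ?_
      rw [hpw]
      exact hInt i h1 h2
    have hA : A (l[p-1]'(by omega)) (l[p]'hp) := by
      have := chain'_getElem' hch (i := p - 1) (by omega)
      simpa only [show p - 1 + 1 = p by omega] using this
    have hx : l[p-1]'(by omega) = l2[i-1]'(by omega) := by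
      refine hforce i h1 h2 _ ?_
      rw [← hpw]
      exact hA
    rcases Nat.lt_or_ge 1 i with hi2 | hi1
    · obtain ⟨hle, hall⟩ := ih (i-1) (by omega) (by omega) (by omega) (p-1) (by omega) hx
      refine ⟨by omega, ?_⟩
      intro j hj
      rcases Nat.lt_or_ge j i with hji | hji
      · have := hall j (by omega)
        simpa only [show p - 1 - (i - 1) + j = p - i + j by omega] using this
      · have hje : j = i := by omega
        subst hje
        simpa only [show p - j + j = p by omega] using hpw
    · have hie : i = 1 := by omega
      subst hie
      refine ⟨by omega, ?_⟩
      intro j hj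
      interval_cases j
      · simpa only [show p - 1 + 0 = p - 1 by omega] using hx
      · simpa only [show p - 1 + 1 = p by omega] using hpw

private lemma fwd_seg {A : V → V → Prop} {l2 : List V}
    (hforce : ∀ (i : ℕ) (h1 : 0 < i) (h2 : i + 1 < l2.length),
      ∀ x, A (l2[i]'(by omega)) x → x = l2[i+1]'h2)
    (Intl : V → Prop)
    (hInt : ∀ (i : ℕ) (h1 : 0 < i) (h2 : i + 1 < l2.length), Intl (l2[i]'(by omega)))
    {l : List V} (hch : l.Chain' A)
    (hlast : ∀ h0 : 0 < l.length, ¬ Intl (l[l.length - 1]'(by omega))) :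
    ∀ (i : ℕ) (h1 : 0 < i) (h2 : i + 1 < l2.length) (p : ℕ) (hp : p < l.length),
      l[p] = l2[i]'(by omega) →
      p + (l2.length - 1 - i) < l.length ∧
      ∀ (j : ℕ) (hj1 : i ≤ j) (hj2 : j < l2.length),
        ∃ (hb : p + j - i < l.length), l[p + j - i]'hb = l2[j]'hj2 := by
  intro i h1 h2 p hp hpw
  set n := l2.length with hn
  set L := l.length with hL
  have hch' : l.reverse.Chain' (flip A) := by
    show l.reverse.IsChain (flip A)
    rw [List.isChain_reverse]
    exact hch
  have hforce' : ∀ (i' : ℕ) (h1' : 0 < i') (h2' : i' + 1 < l2.reverse.length),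
      ∀ x, (flip A) x (l2.reverse[i']'(by omega)) → x = l2.reverse[i'-1]'(by omega) := by
    intro i' h1' h2' x hx
    rw [List.length_reverse] at h2'
    rw [List.getElem_reverse] at hx
    have hk1 : 0 < n - 1 - i' := by omega
    have hk2 : (n - 1 - i') + 1 < n := by omega
    have := hforce (n - 1 - i') hk1 hk2 x hx
    rw [List.getElem_reverse]
    rw [this]
    congr 1
    omega
  have hInt' : ∀ (i' : ℕ) (h1' : 0 < i') (h2' : i' + 1 < l2.reverse.length),
      Intl (l2.reverse[i']'(by omega)) := by
    intro i' h1' h2'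
    rw [List.length_reverse] at h2'
    rw [List.getElem_reverse]
    exact hInt (n - 1 - i') (by omega) (by omega)
  have hhead' : ∀ h0 : 0 < l.reverse.length, ¬ Intl (l.reverse[0]'h0) := by
    intro h0
    rw [List.getElem_reverse]
    rw [List.length_reverse] at h0
    exact hlast h0
  have hrw : l.reverse[L - 1 - p]'(by simp [List.length_reverse]; omega)
      = l2.reverse[n - 1 - i]'(by simp [List.length_reverse]; omega) := by
    rw [List.getElem_reverse, List.getElem_reverse]
    simp only [show l.length - 1 - (L - 1 - p) = p by omega,
        show l2.length - 1 - (n - 1 - i) = i by omega]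
    exact hpw
  obtain ⟨hle, hall⟩ := back_seg hforce' Intl hInt' hch' hhead' (n - 1 - i) (by omega)
    (by rw [List.length_reverse]; omega) (L - 1 - p) (by rw [List.length_reverse]; omega) hrw
  have hbound : p + (n - 1 - i) < L := by omega
  refine ⟨hbound, ?_⟩
  intro j hj1 hj2
  have hjb : n - 1 - j ≤ n - 1 - i := by omega
  have := hall (n - 1 - j) hjb
  rw [List.getElem_reverse, List.getElem_reverse] at this
  have e1 : l.length - 1 - (L - 1 - p - (n - 1 - i) + (n - 1 - j)) = p + j - i := by omega
  have e2 : l2.length - 1 - (n - 1 - j) = j := by omega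
  simp only [e1, e2] at this
  exact ⟨by omega, this⟩

/-- in an oriented cactus, for a cycle decomposing into two directed
`(u1,u2)`-paths of different lengths (`u1` the source, `u2` the sink of the cycle),
if the longer path has no internal cut-vertices then its set of internal vertices is
co-convex. -/
theorem stmt_19 (G : SimpleGraph V) (hG : IsCactus G)
    (A : V → V → Prop) (hA : Oriented A)
    (horient : ∀ u v, G.Adj u v ↔ (A u v ∨ A v u))
    (u1 u2 : V) (l1 l2 : List V)
    (h1 : DiwalkFrom A u1 u2 l1) (h2 : DiwalkFrom A u1 u2 l2)
    (hnd1 : l1.Nodup) (hnd2 : l2.Nodup)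
    (hdisj : ∀ v, v ∈ l1 → v ∈ l2 → v = u1 ∨ v = u2)
    (hcyc : ∃ c : G.Walk u1 u1, c.IsCycle ∧ ∀ v, v ∈ c.support ↔ (v ∈ l1 ∨ v ∈ l2))
    (hlen : l1.length < l2.length)
    (hnocut : ∀ v ∈ l2, v ≠ u1 → v ≠ u2 → ¬ IsCutVertex G v) :
    GeoConvex A {v | ¬ (v ∈ l2 ∧ v ≠ u1 ∧ v ≠ u2)} := by
  classical
  obtain ⟨hch2, hh2, hl2'⟩ := h2
  obtain ⟨hch1, hh1, hl1'⟩ := h1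
  have hne2 : l2 ≠ [] := by intro h; rw [h] at hh2; simp at hh2
  have hne1 : l1 ≠ [] := by intro h; rw [h] at hh1; simp at hh1
  have hn1 : 0 < l2.length := List.length_pos_iff.mpr hne2
  have h20 : l2[0]'hn1 = u1 := by
    rw [List.head?_eq_head hne2] at hh2
    rw [← List.head_eq_getElem hne2]
    exact Option.some_injective _ hh2
  have h2l : l2[l2.length - 1]'(by omega) = u2 := by
    rw [List.getLast?_eq_getLast hne2] at hl2'
    rw [← List.getLast_eq_getElem hne2]
    exact Option.some_injective _ hl2'
  -- reduce goal
  unfold GeoConvex geoInterval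
  rw [Set.union_eq_left]
  rintro w ⟨u, hu, v, hv, l, ⟨⟨hlch, hlh, hll⟩, hmin⟩, hwl⟩
  by_contra hwS
  simp only [Set.mem_setOf_eq, not_not] at hwS
  obtain ⟨hwl2, hwu1, hwu2⟩ := hwS
  obtain ⟨i, hilt, hiw⟩ := List.mem_iff_getElem.mp hwl2
  have hi0 : 0 < i := by
    rcases Nat.eq_zero_or_pos i with h | h
    · subst h; exact absurd (h20.symm.trans hiw).symm hwu1
    · exact h
  have hi1 : i + 1 < l2.length := by
    rcases Nat.lt_or_ge (i + 1) l2.length with h | h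
    · exact h
    · exfalso
      have he : i = l2.length - 1 := by omega
      simp only [he] at hiw
      exact hwu2 (h2l.symm.trans hiw).symm
  set Intl : V → Prop := fun x => x ∈ l2 ∧ x ≠ u1 ∧ x ≠ u2 with hIntl
  have hInt : ∀ (k : ℕ) (hk1 : 0 < k) (hk2 : k + 1 < l2.length),
      Intl (l2[k]'(by omega)) := by
    intro k hk1 hk2
    refine ⟨List.getElem_mem _, ?_, ?_⟩
    · intro h
      have : l2[k]'(by omega) = l2[0]'hn1 := by rw [h20]; exact h
      have := (hnd2.getElem_inj_iff).mp this
      omega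
    · intro h
      have : l2[k]'(by omega) = l2[l2.length - 1]'(by omega) := by rw [h2l]; exact h
      have := (hnd2.getElem_inj_iff).mp this
      omega
  obtain ⟨c, hc, hcs⟩ := hcyc
  -- both directions of the forcing lemma
  have hGf : ∀ (k : ℕ) (hk1 : 0 < k) (hk2 : k + 1 < l2.length),
      ∀ x, G.Adj (l2[k]'(by omega)) x →
        x = l2[k-1]'(by omega) ∨ x = l2[k+1]'hk2 := by
    intro k hk1 hk2 x hGx
    have hpredA : A (l2[k-1]'(by omega)) (l2[k]'(by omega)) := by
      have := chain'_getElem' hch2 (i := k - 1) (by omega)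
      simpa only [show k - 1 + 1 = k by omega] using this
    have hsuccA : A (l2[k]'(by omega)) (l2[k+1]'hk2) := chain'_getElem' hch2 hk2
    have hGpred : G.Adj (l2[k]'(by omega)) (l2[k-1]'(by omega)) :=
      ((horient _ _).mpr (Or.inl hpredA)).symm
    have hGsucc : G.Adj (l2[k]'(by omega)) (l2[k+1]'hk2) :=
      (horient _ _).mpr (Or.inl hsuccA)
    have hps : l2[k-1]'(by omega) ≠ l2[k+1]'hk2 := by
      intro h
      rw [h] at hpredA
      exact hA _ _ hsuccA hpredA
    have hksup : l2[k]'(by omega) ∈ c.support :=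
      (hcs _).mpr (Or.inr (List.getElem_mem _))
    have hIk := hInt k hk1 hk2
    have hncut' : ¬ IsCutVertex G (l2[k]'(by omega)) :=
      hnocut _ hIk.1 hIk.2.1 hIk.2.2
    exact adj_force hG c hc hksup hncut' hGpred hGsucc hps hGx
  have hforce_in : ∀ (k : ℕ) (hk1 : 0 < k) (hk2 : k + 1 < l2.length),
      ∀ x, A x (l2[k]'(by omega)) → x = l2[k-1]'(by omega) := by
    intro k hk1 hk2 x hx
    have hGx : G.Adj (l2[k]'(by omega)) x := ((horient _ _).mpr (Or.inl hx)).symm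
    rcases hGf k hk1 hk2 x hGx with h | h
    · exact h
    · exfalso
      have hsuccA : A (l2[k]'(by omega)) (l2[k+1]'hk2) := chain'_getElem' hch2 hk2
      rw [h] at hx
      exact hA _ _ hsuccA hx
  have hforce_out : ∀ (k : ℕ) (hk1 : 0 < k) (hk2 : k + 1 < l2.length),
      ∀ x, A (l2[k]'(by omega)) x → x = l2[k+1]'hk2 := by
    intro k hk1 hk2 x hx
    have hGx : G.Adj (l2[k]'(by omega)) x := (horient _ _).mpr (Or.inl hx)
    rcases hGf k hk1 hk2 x hGx with h | h
    · exfalso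
      have hpredA : A (l2[k-1]'(by omega)) (l2[k]'(by omega)) := by
        have := chain'_getElem' hch2 (i := k - 1) (by omega)
        simpa only [show k - 1 + 1 = k by omega] using this
      rw [h] at hx
      exact hA _ _ hpredA hx
    · exact h
  -- geodesic endpoints are not internal
  have hlne : l ≠ [] := by intro h; rw [h] at hlh; simp at hlh
  have hl0 : l[0]'(List.length_pos_iff.mpr hlne) = u := by
    rw [List.head?_eq_head hlne] at hlh
    rw [← List.head_eq_getElem hlne]
    exact Option.some_injective _ hlh
  have hllast : l[l.length - 1]'(by have := List.length_pos_iff.mpr hlne; omega) = v := by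
    rw [List.getLast?_eq_getLast hlne] at hll
    rw [← List.getLast_eq_getElem hlne]
    exact Option.some_injective _ hll
  have hhead : ∀ h0 : 0 < l.length, ¬ Intl (l[0]'h0) := by
    intro h0 hint
    rw [hl0] at hint
    exact hu hint
  have hlastn : ∀ h0 : 0 < l.length, ¬ Intl (l[l.length - 1]'(by omega)) := by
    intro h0 hint
    rw [hllast] at hint
    exact hv hint
  obtain ⟨p, hplt, hpw⟩ := List.mem_iff_getElem.mp hwl
  have hpw2 : l[p] = l2[i]'(by omega) := by rw [hpw, ← hiw]
  obtain ⟨hip, hback⟩ := back_seg hforce_in Intl hInt hlch hhead i hi0 hi1 p hplt hpw2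
  obtain ⟨hfwd1, hfwd⟩ := fwd_seg hforce_out Intl hInt hlch hlastn i hi0 hi1 p hplt hpw2
  set n := l2.length with hn
  set m := p - i with hm
  have hmnL : m + n ≤ l.length := by omega
  have hseg : ∀ (j : ℕ) (hj : j < n), l[m + j]'(by omega) = l2[j]'hj := by
    intro j hj
    rcases Nat.lt_or_ge j i with h | h
    · exact hback j (by omega)
    · obtain ⟨hb, hv'⟩ := hfwd j h hj
      have e : p + j - i = m + j := by omega
      simpa only [e] using hv'
  have htake : (l.drop m).take n = l2 := by
    apply List.ext_getElem
    · rw [List.length_take, List.length_drop]; omega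
    · intro j hj1 hj2
      rw [List.getElem_take, List.getElem_drop]
      exact hseg j hj2
  have hdecomp : l = l.take m ++ (l2 ++ l.drop (m + n)) := by
    have hdd : l.drop m = l2 ++ l.drop (m + n) := by
      conv_lhs => rw [← List.take_append_drop n (l.drop m)]
      rw [htake, List.drop_drop]
    rw [← hdd, List.take_append_drop]
  set l' := l.take m ++ (l1 ++ l.drop (m + n)) with hl'def
  have hlen' : l'.length < l.length := by
    have e1 := congrArg List.length hdecomp
    simp only [List.length_append] at e1
    simp only [hl'def, List.length_append]
    omega
  have hd' : DiwalkFrom A u v l' := by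
    refine ⟨?_, ?_, ?_⟩
    · have hc0 : (l.take m ++ (l2 ++ l.drop (m + n))).IsChain A := by
        rw [← hdecomp]; exact hlch
      rw [List.isChain_append] at hc0
      obtain ⟨ha, hbc, hlink⟩ := hc0
      rw [List.isChain_append] at hbc
      obtain ⟨hb, hcc, hlink2⟩ := hbc
      show List.IsChain A l'
      rw [List.isChain_append]
      refine ⟨ha, ?_, ?_⟩
      · rw [List.isChain_append]
        refine ⟨hch1, hcc, ?_⟩
        intro x hx y hy
        refine hlink2 x ?_ y hy
        rw [hl2']
        rw [hl1'] at hx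
        exact hx
      · intro x hx y hy
        refine hlink x hx y ?_
        rw [List.head?_append] at hy ⊢
        rw [hh1] at hy
        rw [hh2]
        exact hy
    · have h := hlh
      rw [hdecomp] at h
      rw [List.head?_append, List.head?_append, hh2] at h
      rw [List.head?_append, List.head?_append, hh1]
      exact h
    · have h := hll
      rw [hdecomp] at h
      rw [List.getLast?_append, List.getLast?_append, hl2'] at h
      rw [List.getLast?_append, List.getLast?_append, hl1']
      exact h
  have := hmin l' hd'
  omega
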